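/- Let Φ : [t₀,∞) → ℝ^{b×b} be symmetric, piecewise continuous and bounded with Φ̄ = sup_{t≥t₀} ‖Φ(t)‖, and suppose ∫_t^{t+T₁} Φ(s) ds ⪰ α₁·I_b for all t ≥ t₀ with α₁, T₁ > 0. Then every solution x of ẋ = −Φ(t)x satisfies ‖x(t+T₁)‖² ≤ (1 − 2α₁/(1 + Φ̄T₁)²) · ‖x(t)‖² for all t ≥ t₀. -/

import Mathlib

open Matrix MeasureTheory
open scoped Kronecker

private lemma psd_symm_dot {n : ℕ} {A : Matrix (Fin n) (Fin n) ℝ} (hA : A.IsHermitian)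
    (p q : Fin n → ℝ) : p ⬝ᵥ A.mulVec q = q ⬝ᵥ A.mulVec p := by
  have hT : Aᵀ = A := by
    rw [← Matrix.conjTranspose_eq_transpose_of_trivial]; exact hA.eq
  rw [Matrix.dotProduct_mulVec, ← Matrix.mulVec_transpose, hT, dotProduct_comm]

private lemma psd_cs {n : ℕ} {A : Matrix (Fin n) (Fin n) ℝ} (hA : A.PosSemidef)
    (u v : Fin n → ℝ) :
    u ⬝ᵥ A.mulVec v ≤ Real.sqrt (u ⬝ᵥ A.mulVec u) * Real.sqrt (v ⬝ᵥ A.mulVec v) := by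
  have hu : 0 ≤ u ⬝ᵥ A.mulVec u := by simpa using hA.dotProduct_mulVec_nonneg u
  have hv : 0 ≤ v ⬝ᵥ A.mulVec v := by simpa using hA.dotProduct_mulVec_nonneg v
  have hq : ∀ l : ℝ, 0 ≤ (v ⬝ᵥ A.mulVec v) * (l * l) + (2 * (u ⬝ᵥ A.mulVec v)) * l
      + u ⬝ᵥ A.mulVec u := by
    intro l
    have h0 : 0 ≤ (u + l • v) ⬝ᵥ A.mulVec (u + l • v) := by simpa using hA.dotProduct_mulVec_nonneg (u + l • v)
    have hsy := psd_symm_dot hA.1 u v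
    have hexp : (u + l • v) ⬝ᵥ A.mulVec (u + l • v)
        = u ⬝ᵥ A.mulVec u + l * (v ⬝ᵥ A.mulVec u) + l * (u ⬝ᵥ A.mulVec v)
          + l * l * (v ⬝ᵥ A.mulVec v) := by
      simp only [Matrix.mulVec_add, Matrix.mulVec_smul, dotProduct_add, add_dotProduct,
        smul_dotProduct, dotProduct_smul, smul_eq_mul]
      ring
    rw [hexp, ← hsy] at h0
    linarith
  have hd := discrim_le_zero hq
  rw [discrim] at hd
  have h2 : (u ⬝ᵥ A.mulVec v) ^ 2 ≤ (u ⬝ᵥ A.mulVec u) * (v ⬝ᵥ A.mulVec v) := by nlinarith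
  calc u ⬝ᵥ A.mulVec v ≤ |u ⬝ᵥ A.mulVec v| := le_abs_self _
    _ = Real.sqrt ((u ⬝ᵥ A.mulVec v) ^ 2) := (Real.sqrt_sq_eq_abs _).symm
    _ ≤ Real.sqrt ((u ⬝ᵥ A.mulVec u) * (v ⬝ᵥ A.mulVec v)) := Real.sqrt_le_sqrt h2
    _ = _ := Real.sqrt_mul hu _

private lemma psd_triangle {n : ℕ} {A : Matrix (Fin n) (Fin n) ℝ} (hA : A.PosSemidef)
    (u v : Fin n → ℝ) :
    (u + v) ⬝ᵥ A.mulVec (u + v) ≤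
      (Real.sqrt (u ⬝ᵥ A.mulVec u) + Real.sqrt (v ⬝ᵥ A.mulVec v)) ^ 2 := by
  have hu : 0 ≤ u ⬝ᵥ A.mulVec u := by simpa using hA.dotProduct_mulVec_nonneg u
  have hv : 0 ≤ v ⬝ᵥ A.mulVec v := by simpa using hA.dotProduct_mulVec_nonneg v
  have hcs := psd_cs hA u v
  have hsy := psd_symm_dot hA.1 u v
  have hexp : (u + v) ⬝ᵥ A.mulVec (u + v)
      = u ⬝ᵥ A.mulVec u + (v ⬝ᵥ A.mulVec u) + (u ⬝ᵥ A.mulVec v) + v ⬝ᵥ A.mulVec v := by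
    simp only [Matrix.mulVec_add, dotProduct_add, add_dotProduct]
    ring
  have h1 : Real.sqrt (u ⬝ᵥ A.mulVec u) ^ 2 = u ⬝ᵥ A.mulVec u := Real.sq_sqrt hu
  have h2 : Real.sqrt (v ⬝ᵥ A.mulVec v) ^ 2 = v ⬝ᵥ A.mulVec v := Real.sq_sqrt hv
  rw [hexp, ← hsy]
  nlinarith [h1, h2, hcs]

private lemma psd_sq_bound {n : ℕ} {A : Matrix (Fin n) (Fin n) ℝ} (hA : A.PosSemidef)
    {C : ℝ} (hb : ∀ v : Fin n → ℝ, v ⬝ᵥ A.mulVec v ≤ C * (v ⬝ᵥ v)) (v : Fin n → ℝ) :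
    (A.mulVec v) ⬝ᵥ (A.mulVec v) ≤ C * (v ⬝ᵥ A.mulVec v) := by
  obtain ⟨S, hS, hSS⟩ : ∃ S : Matrix (Fin n) (Fin n) ℝ, S.PosSemidef ∧ S * S = A := by
    open scoped MatrixOrder in
    exact ⟨CFC.sqrt A, Matrix.nonneg_iff_posSemidef.mp (CFC.sqrt_nonneg A),
      CFC.sqrt_mul_sqrt_self A (Matrix.nonneg_iff_posSemidef.mpr hA)⟩
  have hST : Sᵀ = S := by
    rw [← Matrix.conjTranspose_eq_transpose_of_trivial]; exact hS.1.eq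
  have key : ∀ w : Fin n → ℝ, (S.mulVec w) ⬝ᵥ (S.mulVec w) = w ⬝ᵥ A.mulVec w := by
    intro w
    rw [Matrix.dotProduct_mulVec, ← Matrix.mulVec_transpose, hST, Matrix.mulVec_mulVec, hSS,
      dotProduct_comm]
  have hAv : A.mulVec v = S.mulVec (S.mulVec v) := by
    rw [Matrix.mulVec_mulVec, hSS]
  calc (A.mulVec v) ⬝ᵥ (A.mulVec v) = (S.mulVec v) ⬝ᵥ A.mulVec (S.mulVec v) := by
        rw [hAv, key (S.mulVec v)]
    _ ≤ C * ((S.mulVec v) ⬝ᵥ (S.mulVec v)) := hb _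
    _ = C * (v ⬝ᵥ A.mulVec v) := by rw [key v]

private lemma psd_entry_bound {n : ℕ} {A : Matrix (Fin n) (Fin n) ℝ} (hA : A.PosSemidef)
    {C : ℝ} (hC : 0 ≤ C) (hb : ∀ v : Fin n → ℝ, v ⬝ᵥ A.mulVec v ≤ C * (v ⬝ᵥ v))
    (i j : Fin n) : |A i j| ≤ C := by
  have hei : ∀ k l : Fin n, (Pi.single k 1 : Fin n → ℝ) ⬝ᵥ A.mulVec (Pi.single l 1) = A k l := by
    intro k l
    simp [Matrix.mulVec_single, single_dotProduct, dotProduct, Pi.single_apply,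
      Finset.sum_ite_eq']
  have hdiag : ∀ k : Fin n, A k k ≤ C := by
    intro k
    have := hb (Pi.single k 1)
    rw [hei k k] at this
    simpa [dotProduct, Pi.single_apply, Finset.sum_ite_eq'] using this
  have h0 : ∀ k : Fin n, 0 ≤ A k k := by
    intro k
    have := hA.dotProduct_mulVec_nonneg (Pi.single k 1)
    simpa [hei k k] using this
  have hcs := psd_cs hA (Pi.single i 1) (Pi.single j 1)
  have hcs' := psd_cs hA (Pi.single i 1) (-(Pi.single j 1))
  rw [hei i j] at hcs
  have hneg : (Pi.single i 1 : Fin n → ℝ) ⬝ᵥ A.mulVec (-(Pi.single j 1)) = -(A i j) := by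
    rw [Matrix.mulVec_neg, dotProduct_neg, hei i j]
  have hneg2 : (-(Pi.single j 1) : Fin n → ℝ) ⬝ᵥ A.mulVec (-(Pi.single j 1)) =
      (Pi.single j 1 : Fin n → ℝ) ⬝ᵥ A.mulVec (Pi.single j 1) := by
    rw [Matrix.mulVec_neg, dotProduct_neg, neg_dotProduct, neg_neg]
  rw [hneg, hneg2] at hcs'
  have hsq : ∀ k : Fin n, Real.sqrt ((Pi.single k 1 : Fin n → ℝ) ⬝ᵥ A.mulVec (Pi.single k 1))
      ≤ Real.sqrt C := by
    intro k
    apply Real.sqrt_le_sqrt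
    rw [hei k k]
    exact hdiag k
  have hCC : Real.sqrt C * Real.sqrt C = C := Real.mul_self_sqrt hC
  have hb1 : A i j ≤ C := by
    calc A i j ≤ _ := hcs
      _ ≤ Real.sqrt C * Real.sqrt C := by
          apply mul_le_mul (hsq i) (hsq j) (Real.sqrt_nonneg _) (Real.sqrt_nonneg _)
      _ = C := hCC
  have hb2 : -(A i j) ≤ C := by
    calc -(A i j) ≤ _ := hcs'
      _ ≤ Real.sqrt C * Real.sqrt C := by
          apply mul_le_mul (hsq i) (hsq j) (Real.sqrt_nonneg _) (Real.sqrt_nonneg _)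
      _ = C := hCC
  exact abs_le.2 ⟨by linarith, hb1⟩

private lemma II_of_bdd {f : ℝ → ℝ} {a c M : ℝ} (hac : a ≤ c)
    (hm : AEMeasurable f (volume.restrict (Set.Ioc a c)))
    (hb : ∀ s ∈ Set.Ioc a c, |f s| ≤ M) : IntervalIntegrable f volume a c := by
  rw [intervalIntegrable_iff_integrableOn_Ioc_of_le hac]
  refine (integrableOn_const (C := M) (s := Set.Ioc a c) (μ := volume) measure_Ioc_lt_top.ne).mono' hm.aestronglyMeasurable ?_
  exact (ae_restrict_iff' measurableSet_Ioc).2 (Filter.Eventually.of_forall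
    (fun s hs => by simpa using hb s hs))

private lemma II_of_bdd_vec {n : ℕ} {f : ℝ → EuclideanSpace ℝ (Fin n)} {a c M : ℝ}
    (hac : a ≤ c)
    (hm : AEStronglyMeasurable f (volume.restrict (Set.Ioc a c)))
    (hb : ∀ s ∈ Set.Ioc a c, ‖f s‖ ≤ M) : IntervalIntegrable f volume a c := by
  rw [intervalIntegrable_iff_integrableOn_Ioc_of_le hac]
  refine (integrableOn_const (C := M) (s := Set.Ioc a c) (μ := volume) measure_Ioc_lt_top.ne).mono' hm ?_
  exact (ae_restrict_iff' measurableSet_Ioc).2 (Filter.Eventually.of_forall hb)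


set_option maxHeartbeats 2000000 in
/-- one-window contraction for `ẋ = −Φ(t)x` under persistent
excitation: `‖x(t+T₁)‖² ≤ (1 − 2α₁/(1+Φ̄T₁)²)‖x(t)‖²`. -/
theorem window_contraction (b : ℕ) (t₀ α₁ T₁ Φbar : ℝ)
    (hα₁ : 0 < α₁) (hT₁ : 0 < T₁) (hΦbar : 0 ≤ Φbar)
    (Φ : ℝ → Matrix (Fin b) (Fin b) ℝ)
    (hsymm : ∀ t, t₀ ≤ t → (Φ t).IsSymm)
    (hpsd : ∀ t, t₀ ≤ t → (Φ t).PosSemidef)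
    (hmeas : ∀ i j, Measurable fun t => Φ t i j)
    (hbd : ∀ t, t₀ ≤ t → ∀ v : Fin b → ℝ,
      v ⬝ᵥ (Φ t).mulVec v ≤ Φbar * (v ⬝ᵥ v))
    (hPE : ∀ t, t₀ ≤ t →
      (Matrix.of (fun i j => ∫ s in t..(t + T₁), Φ s i j) -
        α₁ • (1 : Matrix (Fin b) (Fin b) ℝ)).PosSemidef)
    (x : ℝ → Fin b → ℝ)
    (hx : ∀ t, t₀ ≤ t → HasDerivAt x (-(Φ t).mulVec (x t)) t) :
    ∀ t, t₀ ≤ t →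
      ∑ i, (x (t + T₁) i) ^ 2 ≤
        (1 - 2 * α₁ / (1 + Φbar * T₁) ^ 2) * ∑ i, (x t i) ^ 2 := by
  intro t ht
  have htT : t ≤ t + T₁ := le_add_of_nonneg_right hT₁.le
  set T := t + T₁ with hTdef
  have hts : ∀ s, t ≤ s → t₀ ≤ s := fun s hs => ht.trans hs
  set q : ℝ → ℝ := fun s => x s ⬝ᵥ (Φ s).mulVec (x s) with hqdef
  set V : ℝ → ℝ := fun s => x s ⬝ᵥ x s with hVdef
  set g : ℝ → ℝ := fun s => Real.sqrt (q s) with hgdef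
  have hq0 : ∀ s, t₀ ≤ s → 0 ≤ q s := fun s hs => by simpa using (hpsd s hs).dotProduct_mulVec_nonneg (x s)
  have hg0 : ∀ s, 0 ≤ g s := fun s => Real.sqrt_nonneg _
  have hgsq : ∀ s, t₀ ≤ s → g s ^ 2 = q s := fun s hs => Real.sq_sqrt (hq0 s hs)
  have hV0 : ∀ s, 0 ≤ V s := fun s => Finset.sum_nonneg fun i _ => mul_self_nonneg _
  -- derivatives of components of x
  have hxd : ∀ (i : Fin b) (s : ℝ), t₀ ≤ s →
      HasDerivAt (fun u => x u i) ((-(Φ s).mulVec (x s)) i) s := by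
    intro i s hs
    have := (ContinuousLinearMap.proj (R := ℝ) (φ := fun _ : Fin b => ℝ)
      i).hasFDerivAt.comp_hasDerivAt s (hx s hs)
    exact this
  -- derivative of V
  have hVd : ∀ s, t₀ ≤ s → HasDerivAt V (-(2 * q s)) s := by
    intro s hs
    have h1 : HasDerivAt (fun u => ∑ i, x u i * x u i)
        (∑ i, ((-(Φ s).mulVec (x s)) i * x s i + x s i * (-(Φ s).mulVec (x s)) i)) s :=
      HasDerivAt.fun_sum fun i _ => (hxd i s hs).mul (hxd i s hs)
    have h2 : V = fun u => ∑ i, x u i * x u i := by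
      funext u; simp [hVdef, dotProduct]
    rw [h2]
    convert h1 using 1
    have : ∀ i : Fin b, (-(Φ s).mulVec (x s)) i * x s i + x s i * (-(Φ s).mulVec (x s)) i
        = -(2 * (x s i * ((Φ s).mulVec (x s)) i)) := by
      intro i; simp only [Pi.neg_apply]; ring
    rw [Finset.sum_congr rfl fun i _ => this i]
    simp [hqdef, dotProduct, Finset.mul_sum]
  -- V is antitone
  have hVc : ContinuousOn V (Set.Ici t₀) := fun s hs =>
    ((hVd s hs).continuousAt).continuousWithinAt
  have hVanti : AntitoneOn V (Set.Ici t₀) := by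
    apply antitoneOn_of_deriv_nonpos (convex_Ici t₀) hVc
    · intro s hs
      rw [interior_Ici] at hs
      exact ((hVd s hs.le).differentiableAt).differentiableWithinAt
    · intro s hs
      rw [interior_Ici] at hs
      rw [(hVd s hs.le).deriv]
      have := hq0 s hs.le; linarith
  have hVmono : ∀ s, t ≤ s → V s ≤ V t := fun s hs =>
    hVanti (Set.mem_Ici.2 ht) (Set.mem_Ici.2 (hts s hs)) hs
  -- measurability of the pieces
  have hxcont : ∀ i, ContinuousOn (fun s => x s i) (Set.Ici t₀) := fun i s hs =>
    ((hxd i s hs).continuousAt).continuousWithinAt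
  have hIocsub : Set.Ioc t T ⊆ Set.Ici t₀ := fun s hs => hts s hs.1.le
  have hxaem : ∀ i, AEMeasurable (fun s => x s i) (volume.restrict (Set.Ioc t T)) :=
    fun i => ((hxcont i).mono hIocsub).aemeasurable measurableSet_Ioc
  have hqaem : AEMeasurable q (volume.restrict (Set.Ioc t T)) := by
    have hq' : q = fun s => ∑ i, x s i * ∑ j, Φ s i j * x s j := by
      funext s; simp [hqdef, dotProduct, Matrix.mulVec]
    rw [hq']
    exact Finset.aemeasurable_fun_sum _ fun i _ => (hxaem i).mul
      (Finset.aemeasurable_fun_sum _ fun j _ => ((hmeas i j).aemeasurable).mul (hxaem j))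
  have hqbd : ∀ s ∈ Set.Icc t T, q s ≤ Φbar * V t := by
    intro s hs
    calc q s ≤ Φbar * V s := hbd s (hts s hs.1) (x s)
      _ ≤ Φbar * V t := mul_le_mul_of_nonneg_left (hVmono s hs.1) hΦbar
  have hqI : IntervalIntegrable q volume t T :=
    II_of_bdd htT hqaem (fun s hs => by
      rw [abs_of_nonneg (hq0 s (hts s hs.1.le))]
      exact hqbd s ⟨hs.1.le, hs.2⟩)
  have hgaem : AEMeasurable g (volume.restrict (Set.Ioc t T)) :=
    Real.continuous_sqrt.measurable.comp_aemeasurable hqaem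
  have hgbd : ∀ s ∈ Set.Icc t T, g s ≤ Real.sqrt (Φbar * V t) := fun s hs =>
    Real.sqrt_le_sqrt (hqbd s hs)
  have hgI : IntervalIntegrable g volume t T :=
    II_of_bdd htT hgaem (fun s hs => by
      rw [abs_of_nonneg (hg0 s)]; exact hgbd s ⟨hs.1.le, hs.2⟩)
  -- FTC for V
  have hftcV : ∫ s in t..T, -(2 * q s) = V T - V t := by
    apply intervalIntegral.integral_eq_sub_of_hasDerivAt
    · intro s hs
      rw [Set.uIcc_of_le htT] at hs
      exact hVd s (hts s hs.1)
    · exact (hqI.const_mul (2:ℝ)).neg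
  set K := ∫ s in t..T, q s with hKdef
  have hK0 : 0 ≤ K := intervalIntegral.integral_nonneg htT (fun u hu => hq0 u (hts u hu.1))
  have hVT : V T = V t - 2*K := by
    have h2 : (∫ s in t..T, -(2 * q s)) = -2 * K := by
      have h3 : (fun s => -(2 * q s)) = fun s => (-2) * q s := by funext s; ring
      rw [h3, intervalIntegral.integral_const_mul]
    rw [h2] at hftcV
    linarith
  -- interval integrability of matrix entries
  have hΦint : ∀ i j, IntervalIntegrable (fun s => Φ s i j) volume t T :=
    fun i j => II_of_bdd htT ((hmeas i j).aemeasurable)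
      (fun s hs => psd_entry_bound (hpsd s (hts s hs.1.le)) hΦbar (hbd s (hts s hs.1.le)) i j)
  -- persistent excitation unpacked
  have hPE' : α₁ * V t ≤ ∫ s in t..T, x t ⬝ᵥ (Φ s).mulVec (x t) := by
    have h0 := (hPE t ht).dotProduct_mulVec_nonneg (x t)
    have h1 : 0 ≤ x t ⬝ᵥ ((Matrix.of fun i j => ∫ s in t..T, Φ s i j)
        - α₁ • (1 : Matrix (Fin b) (Fin b) ℝ)).mulVec (x t) := by simpa using h0
    rw [Matrix.sub_mulVec, dotProduct_sub, Matrix.smul_mulVec, Matrix.one_mulVec,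
      dotProduct_smul, smul_eq_mul] at h1
    have hinner : ∀ i : Fin b, IntervalIntegrable (fun s => ∑ j, Φ s i j * x t j) volume t T := by
      intro i
      have : (fun s => ∑ j, Φ s i j * x t j)
          = ∑ j : Fin b, (fun s => Φ s i j * x t j) := by funext s; simp
      rw [this]
      exact IntervalIntegrable.sum _ fun j _ => (hΦint i j).mul_const _
    have h2 : x t ⬝ᵥ (Matrix.of fun i j => ∫ s in t..T, Φ s i j).mulVec (x t)
        = ∫ s in t..T, x t ⬝ᵥ (Φ s).mulVec (x t) := by
      simp only [dotProduct, Matrix.mulVec, Matrix.of_apply]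
      rw [intervalIntegral.integral_finset_sum (fun i _ => (hinner i).const_mul (x t i))]
      apply Finset.sum_congr rfl
      intro i _
      rw [intervalIntegral.integral_const_mul]
      congr 1
      rw [intervalIntegral.integral_finset_sum (fun j _ => (hΦint i j).mul_const (x t j))]
      apply Finset.sum_congr rfl
      intro j _
      rw [intervalIntegral.integral_mul_const]
    rw [h2] at h1
    have : V t = x t ⬝ᵥ x t := rfl
    linarith
  -- Euclidean space embedding
  set L : (Fin b → ℝ) →L[ℝ] EuclideanSpace ℝ (Fin b) :=
    ((PiLp.continuousLinearEquiv 2 ℝ (fun _ : Fin b => ℝ)).symm :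
      (Fin b → ℝ) →L[ℝ] EuclideanSpace ℝ (Fin b)) with hLdef
  have hLnorm : ∀ v : Fin b → ℝ, ‖L v‖ = Real.sqrt (v ⬝ᵥ v) := by
    intro v
    rw [EuclideanSpace.norm_eq]
    congr 1
    simp [hLdef, Real.norm_eq_abs, sq_abs, dotProduct, pow_two,
      PiLp.coe_symm_continuousLinearEquiv, PiLp.toLp_apply]
  have hFd : ∀ u, t₀ ≤ u → HasDerivAt (fun s => L (x s)) (L (-(Φ u).mulVec (x u))) u :=
    fun u hu => L.hasFDerivAt.comp_hasDerivAt u (hx u hu)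
  have hF'aesm : AEStronglyMeasurable (fun u => L (-(Φ u).mulVec (x u)))
      (volume.restrict (Set.Ioc t T)) := by
    apply L.continuous.comp_aestronglyMeasurable
    apply AEMeasurable.aestronglyMeasurable
    have hcomp : ∀ i : Fin b, AEMeasurable (fun u => -(∑ j, Φ u i j * x u j))
        (volume.restrict (Set.Ioc t T)) := fun i =>
      (Finset.aemeasurable_fun_sum _ fun j _ => ((hmeas i j).aemeasurable).mul (hxaem j)).neg
    refine ⟨fun u i => (hcomp i).mk _ u,
      measurable_pi_iff.2 fun i => (hcomp i).measurable_mk, ?_⟩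
    filter_upwards [MeasureTheory.ae_all_iff.2 fun i => (hcomp i).ae_eq_mk] with u hu
    funext i
    simpa [Matrix.mulVec, dotProduct] using hu i
  have hF'g : ∀ u, t₀ ≤ u → ‖L (-(Φ u).mulVec (x u))‖ ≤ Real.sqrt Φbar * g u := by
    intro u hu
    rw [hLnorm]
    have h1 : (-(Φ u).mulVec (x u)) ⬝ᵥ (-(Φ u).mulVec (x u))
        = ((Φ u).mulVec (x u)) ⬝ᵥ ((Φ u).mulVec (x u)) := by
      rw [neg_dotProduct, dotProduct_neg, neg_neg]
    rw [h1]
    have h2 := psd_sq_bound (hpsd u hu) (hbd u hu) (x u)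
    calc Real.sqrt (((Φ u).mulVec (x u)) ⬝ᵥ ((Φ u).mulVec (x u)))
        ≤ Real.sqrt (Φbar * q u) := Real.sqrt_le_sqrt h2
      _ = Real.sqrt Φbar * g u := Real.sqrt_mul hΦbar _
  have hF'I : IntervalIntegrable (fun u => L (-(Φ u).mulVec (x u))) volume t T :=
    II_of_bdd_vec htT hF'aesm (fun u hu =>
      (hF'g u (hts u hu.1.le)).trans
        (mul_le_mul_of_nonneg_left (hgbd u ⟨hu.1.le, hu.2⟩) (Real.sqrt_nonneg _)))
  -- constants
  set I₁ := ∫ u in t..T, g u with hI₁def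
  have hI₁0 : 0 ≤ I₁ := intervalIntegral.integral_nonneg htT (fun u _ => hg0 u)
  set C := Φbar * I₁ with hCdef
  have hC0 : 0 ≤ C := mul_nonneg hΦbar hI₁0
  -- the key pointwise estimate
  have hkey : ∀ s ∈ Set.Icc t T, x t ⬝ᵥ (Φ s).mulVec (x t) ≤ q s + 2*C*(g s) + C^2 := by
    intro s hs
    have hs0 : t₀ ≤ s := hts s hs.1
    set d : Fin b → ℝ := x t - x s with hddef
    have htri : x t ⬝ᵥ (Φ s).mulVec (x t)
        ≤ (g s + Real.sqrt (d ⬝ᵥ (Φ s).mulVec d))^2 := by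
      have h := psd_triangle (hpsd s hs0) (x s) d
      have hxd' : x s + d = x t := by rw [hddef]; abel
      rw [hxd'] at h
      exact h
    have hsub : Set.uIcc t s ⊆ Set.uIcc t T := by
      rw [Set.uIcc_of_le hs.1, Set.uIcc_of_le htT]
      exact Set.Icc_subset_Icc le_rfl hs.2
    have hsub' : Set.uIcc s T ⊆ Set.uIcc t T := by
      rw [Set.uIcc_of_le hs.2, Set.uIcc_of_le htT]
      exact Set.Icc_subset_Icc hs.1 le_rfl
    have hgI_s : IntervalIntegrable g volume t s := hgI.mono_set hsub
    have hF'I_s : IntervalIntegrable (fun u => L (-(Φ u).mulVec (x u))) volume t s :=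
      hF'I.mono_set hsub
    have hftcF : ∫ u in t..s, L (-(Φ u).mulVec (x u)) = L (x s) - L (x t) := by
      apply intervalIntegral.integral_eq_sub_of_hasDerivAt
      · intro u hu
        rw [Set.uIcc_of_le hs.1] at hu
        exact hFd u (hts u hu.1)
      · exact hF'I_s
    have hdd : Real.sqrt (d ⬝ᵥ d) ≤ Real.sqrt Φbar * ∫ u in t..s, g u := by
      have h1 : Real.sqrt (d ⬝ᵥ d) = ‖L (x t) - L (x s)‖ := by
        rw [← map_sub, hLnorm]
      rw [h1]
      have h2 : ‖L (x t) - L (x s)‖ = ‖∫ u in t..s, L (-(Φ u).mulVec (x u))‖ := by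
        rw [hftcF, norm_sub_rev]
      rw [h2]
      calc ‖∫ u in t..s, L (-(Φ u).mulVec (x u))‖
          ≤ ∫ u in t..s, ‖L (-(Φ u).mulVec (x u))‖ :=
            intervalIntegral.norm_integral_le_integral_norm hs.1
        _ ≤ ∫ u in t..s, Real.sqrt Φbar * g u := by
            apply intervalIntegral.integral_mono_on hs.1 hF'I_s.norm
              (hgI_s.const_mul _)
            intro u hu
            exact hF'g u (hts u hu.1)
        _ = Real.sqrt Φbar * ∫ u in t..s, g u :=
            intervalIntegral.integral_const_mul _ _
    have hsub2 : (∫ u in t..s, g u) ≤ I₁ := by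
      have hgI_s2 : IntervalIntegrable g volume s T := hgI.mono_set hsub'
      have hadd := intervalIntegral.integral_add_adjacent_intervals hgI_s hgI_s2
      have hpos : 0 ≤ ∫ u in s..T, g u :=
        intervalIntegral.integral_nonneg hs.2 (fun u _ => hg0 u)
      rw [hI₁def]; linarith
    have hdΦd : Real.sqrt (d ⬝ᵥ (Φ s).mulVec d) ≤ C := by
      have h1 : d ⬝ᵥ (Φ s).mulVec d ≤ Φbar * (d ⬝ᵥ d) := hbd s hs0 d
      calc Real.sqrt (d ⬝ᵥ (Φ s).mulVec d) ≤ Real.sqrt (Φbar * (d ⬝ᵥ d)) :=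
            Real.sqrt_le_sqrt h1
        _ = Real.sqrt Φbar * Real.sqrt (d ⬝ᵥ d) := Real.sqrt_mul hΦbar _
        _ ≤ Real.sqrt Φbar * (Real.sqrt Φbar * ∫ u in t..s, g u) :=
            mul_le_mul_of_nonneg_left hdd (Real.sqrt_nonneg _)
        _ = Φbar * ∫ u in t..s, g u := by rw [← mul_assoc, Real.mul_self_sqrt hΦbar]
        _ ≤ Φbar * I₁ := mul_le_mul_of_nonneg_left hsub2 hΦbar
    calc x t ⬝ᵥ (Φ s).mulVec (x t) ≤ (g s + Real.sqrt (d ⬝ᵥ (Φ s).mulVec d))^2 := htri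
      _ ≤ (g s + C)^2 := by
          apply pow_le_pow_left₀ (by positivity) (add_le_add_right hdΦd _)
      _ = q s + 2*C*(g s) + C^2 := by
          rw [add_sq, hgsq s hs0]; ring
  -- integrability of the PE integrand
  have hwI : IntervalIntegrable (fun s => x t ⬝ᵥ (Φ s).mulVec (x t)) volume t T := by
    apply II_of_bdd htT
    · have h' : (fun s => x t ⬝ᵥ (Φ s).mulVec (x t))
          = fun s => ∑ i, x t i * ∑ j, Φ s i j * x t j := by
        funext s; simp [dotProduct, Matrix.mulVec]
      rw [h']
      exact Finset.aemeasurable_fun_sum _ fun i _ => (aemeasurable_const.mul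
        (Finset.aemeasurable_fun_sum _ fun j _ => ((hmeas i j).aemeasurable).mul aemeasurable_const))
    · intro s hs
      have hs0 : t₀ ≤ s := hts s hs.1.le
      have h1 : 0 ≤ x t ⬝ᵥ (Φ s).mulVec (x t) := by simpa using (hpsd s hs0).dotProduct_mulVec_nonneg (x t)
      rw [abs_of_nonneg h1]
      exact hbd s hs0 (x t)
  -- integrate the key estimate
  have hKbd : α₁ * V t ≤ K + 2*C*I₁ + C^2*T₁ := by
    have hint2 : IntervalIntegrable (fun s => q s + 2*C*(g s)) volume t T :=
      hqI.add (hgI.const_mul _)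
    have hint3 : IntervalIntegrable (fun s => q s + 2*C*(g s) + C^2) volume t T :=
      hint2.add intervalIntegrable_const
    have hmono : (∫ s in t..T, x t ⬝ᵥ (Φ s).mulVec (x t))
        ≤ ∫ s in t..T, (q s + 2*C*(g s) + C^2) :=
      intervalIntegral.integral_mono_on htT hwI hint3 hkey
    have hsplit : (∫ s in t..T, (q s + 2*C*(g s) + C^2)) = K + 2*C*I₁ + C^2*T₁ := by
      rw [intervalIntegral.integral_add hint2 intervalIntegrable_const,
        intervalIntegral.integral_add hqI (hgI.const_mul _),
        intervalIntegral.integral_const_mul, intervalIntegral.integral_const]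
      rw [hTdef]
      simp [hKdef, hI₁def]
      ring
    linarith
  -- Cauchy–Schwarz : I₁² ≤ T₁ K
  have hCS : I₁^2 ≤ T₁ * K := by
    have hq2 : ∀ l : ℝ, 0 ≤ T₁ * (l*l) + (-(2*I₁))*l + K := by
      intro l
      have hnn : 0 ≤ ∫ s in t..T, (g s - l)^2 :=
        intervalIntegral.integral_nonneg htT (fun u _ => sq_nonneg _)
      have hexp : (∫ s in t..T, (g s - l)^2)
          = ∫ s in t..T, (q s + (-(2*l))*(g s) + l^2) := by
        apply intervalIntegral.integral_congr
        intro u hu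
        rw [Set.uIcc_of_le htT] at hu
        have hg2 := hgsq u (hts u hu.1)
        simp only []
        rw [sub_sq, hg2]
        ring
      have hint2 : IntervalIntegrable (fun s => q s + (-(2*l))*(g s)) volume t T :=
        hqI.add (hgI.const_mul _)
      have hsplit2 : (∫ s in t..T, (q s + (-(2*l))*(g s) + l^2))
          = K + (-(2*l))*I₁ + l^2*T₁ := by
        rw [intervalIntegral.integral_add hint2 intervalIntegrable_const,
          intervalIntegral.integral_add hqI (hgI.const_mul _),
          intervalIntegral.integral_const_mul, intervalIntegral.integral_const]
        rw [hTdef]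
        simp [hKdef, hI₁def]
        ring
      rw [hexp, hsplit2] at hnn
      nlinarith [hnn]
    have hd := discrim_le_zero hq2
    rw [discrim] at hd
    nlinarith [hd]
  -- combine everything
  have hKlow : α₁ * V t ≤ (1 + Φbar*T₁)^2 * K := by
    have h3 : 2*Φbar*I₁^2 ≤ 2*Φbar*(T₁*K) :=
      mul_le_mul_of_nonneg_left hCS (by positivity)
    have h4 : Φbar^2*T₁*I₁^2 ≤ Φbar^2*T₁*(T₁*K) :=
      mul_le_mul_of_nonneg_left hCS (by positivity)
    have h5 : 2*C*I₁ = 2*Φbar*I₁^2 := by rw [hCdef]; ring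
    have h6 : C^2*T₁ = Φbar^2*T₁*I₁^2 := by rw [hCdef]; ring
    nlinarith [hKbd, h3, h4]
  have hden : (0:ℝ) < (1+Φbar*T₁)^2 := by positivity
  have hKge : α₁ * V t / (1+Φbar*T₁)^2 ≤ K := (div_le_iff₀ hden).2 (by linarith)
  have hfinal : V T ≤ (1 - 2*α₁/(1+Φbar*T₁)^2) * V t := by
    rw [hVT]
    have hring : (1 - 2*α₁/(1+Φbar*T₁)^2) * V t
        = V t - 2*(α₁*V t/(1+Φbar*T₁)^2) := by ring
    rw [hring]
    linarith
  have hgoal1 : ∑ i, (x T i)^2 = V T := by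
    simp [hVdef, dotProduct, pow_two]
  have hgoal2 : ∑ i, (x t i)^2 = V t := by
    simp [hVdef, dotProduct, pow_two]
  rw [hgoal1, hgoal2]
  exact hfinal
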